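/- Let f₁, f₂, f₃, f₄, g₁, g₂, g₄ ∈ ℂ and set g₃ := −f₃f₄. Put f = ((f₁, f₂), (f₃, f₄)), g = ((g₁, g₂), (g₃, g₄)), f^♯ = J₂ fᵗ J₂, d := I₂ + E₄·conj(f^♯)ᵗ·f^♯ + E₄·conj(g)ᵗ·E₁·g, and u^♯ := (f^♯ − conj(f)ᵗ·E₁·g)·d⁻¹. Then I₂ + conj(f)ᵗ·E₁·f − u^♯·d·E₄·conj(u^♯)ᵗ equals the diagonal matrix diag((1+|f₃|²)/(1+|f₄|²), (1+|f₄|²)/(1+|f₃|²)). -/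

import Mathlib

open Matrix

noncomputable section

/-- `J₂ = ((0,1),(1,0))`. -/
def J2 : Matrix (Fin 2) (Fin 2) ℂ := !![0, 1; 1, 0]

/-- `E₁ = ((0,0),(0,1))`. -/
def E1 : Matrix (Fin 2) (Fin 2) ℂ := !![0, 0; 0, 1]

/-- `E₄ = ((1,0),(0,0))`. -/
def E4 : Matrix (Fin 2) (Fin 2) ℂ := !![1, 0; 0, 0]

/-- Entrywise complex conjugation of a matrix. -/
def conjM {m n : Type*} (M : Matrix m n ℂ) : Matrix m n ℂ := M.map (starRingEnd ℂ)

lemma conjM_fin_two (a b c d : ℂ) :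
    conjM !![a, b; c, d] = !![(starRingEnd ℂ) a, (starRingEnd ℂ) b;
      (starRingEnd ℂ) c, (starRingEnd ℂ) d] := by
  ext i j
  fin_cases i <;> fin_cases j <;> simp [conjM]

lemma conjM_mul {n : Type*} [Fintype n] (X Y : Matrix n n ℂ) :
    conjM (X * Y) = conjM X * conjM Y := Matrix.map_mul

set_option maxHeartbeats 1000000 in
/-- with `g₃ = −f₃f₄`, `d = I₂ + E₄ conj(f^♯)ᵗ f^♯ + E₄ conj(g)ᵗ E₁ g` and
`u^♯ = (f^♯ − conj(f)ᵗ E₁ g) d⁻¹`, one has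
`I₂ + conj(f)ᵗ E₁ f − u^♯ d E₄ conj(u^♯)ᵗ = diag((1+|f₃|²)/(1+|f₄|²), (1+|f₄|²)/(1+|f₃|²))`. -/
theorem stmt14 (f₁ f₂ f₃ f₄ g₁ g₂ g₄ : ℂ) (g₃ : ℂ) (hg₃ : g₃ = -(f₃ * f₄))
    (f g fsh d ush : Matrix (Fin 2) (Fin 2) ℂ)
    (hf : f = !![f₁, f₂; f₃, f₄]) (hg : g = !![g₁, g₂; g₃, g₄])
    (hfsh : fsh = J2 * fᵀ * J2)
    (hd : d = 1 + E4 * (conjM fsh)ᵀ * fsh + E4 * (conjM g)ᵀ * E1 * g)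
    (hush : ush = (fsh - (conjM f)ᵀ * E1 * g) * d⁻¹) :
    1 + (conjM f)ᵀ * E1 * f - ush * d * E4 * (conjM ush)ᵀ =
      !![((((1 + ‖f₃‖ ^ 2) / (1 + ‖f₄‖ ^ 2) : ℝ)) : ℂ), 0;
         0, ((((1 + ‖f₄‖ ^ 2) / (1 + ‖f₃‖ ^ 2) : ℝ)) : ℂ)] := by
  have key : ∀ z : ℂ, (starRingEnd ℂ) z * z = ((‖z‖ ^ 2 : ℝ) : ℂ) := fun z => by
    rw [mul_comm, Complex.mul_conj, Complex.normSq_eq_norm_sq]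
  obtain ⟨A, hA⟩ : ∃ A : ℂ, A = (1 + (starRingEnd ℂ) f₃ * f₃) * (1 + (starRingEnd ℂ) f₄ * f₄) :=
    ⟨_, rfl⟩
  obtain ⟨B, hB⟩ : ∃ B : ℂ, B = (starRingEnd ℂ) f₄ * f₂ + (starRingEnd ℂ) f₃ * f₁
      - (starRingEnd ℂ) f₃ * (starRingEnd ℂ) f₄ * g₄ := ⟨_, rfl⟩
  have h3 : (1 : ℂ) + (starRingEnd ℂ) f₃ * f₃ ≠ 0 := by
    rw [key]
    have : ((1 + ‖f₃‖ ^ 2 : ℝ) : ℂ) ≠ 0 := by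
      exact_mod_cast ne_of_gt (by positivity : (0:ℝ) < 1 + ‖f₃‖ ^ 2)
    simpa using this
  have h4 : (1 : ℂ) + (starRingEnd ℂ) f₄ * f₄ ≠ 0 := by
    rw [key]
    have : ((1 + ‖f₄‖ ^ 2 : ℝ) : ℂ) ≠ 0 := by
      exact_mod_cast ne_of_gt (by positivity : (0:ℝ) < 1 + ‖f₄‖ ^ 2)
    simpa using this
  have hAne : A ≠ 0 := hA ▸ mul_ne_zero h3 h4
  have hconjA : (starRingEnd ℂ) A = A := by
    rw [hA]; simp; ring
  have hfsh' : fsh = !![f₄, f₂; f₃, f₁] := by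
    rw [hfsh, hf]
    ext i j
    fin_cases i <;> fin_cases j <;>
      · simp only [J2, Matrix.mul_apply, Matrix.transpose_apply, Fin.sum_univ_two,
          Matrix.cons_val', Matrix.cons_val_zero, Matrix.cons_val_one, Matrix.head_cons,
          Matrix.head_fin_const, Matrix.empty_val', Matrix.cons_val_fin_one, Matrix.of_apply,
          Fin.mk_zero, Fin.mk_one]
        ring
  have hd' : d = !![A, B; 0, 1] := by
    rw [hd, hfsh', hg, hg₃, hA, hB, conjM_fin_two, conjM_fin_two]
    ext i j
    fin_cases i <;> fin_cases j <;>
      · simp only [E1, E4, Matrix.add_apply, Matrix.mul_apply, Matrix.one_apply,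
          Fin.sum_univ_two, Matrix.transpose_apply, Matrix.cons_val', Matrix.cons_val_zero,
          Matrix.cons_val_one, Matrix.head_cons, Matrix.head_fin_const, Matrix.empty_val',
          Matrix.cons_val_fin_one, Matrix.of_apply, Fin.mk_zero, Fin.mk_one]
        simp only [_root_.map_mul, _root_.map_neg, Complex.conj_conj, reduceIte, if_true,
          Fin.one_eq_zero_iff, Fin.zero_eq_one_iff, OfNat.ofNat_ne_one, OfNat.ofNat_ne_zero,
          if_false, Nat.succ_ne_self]
        norm_num
        try ring
  have hdet : IsUnit d.det := by
    rw [hd', Matrix.det_fin_two_of]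
    simpa using hAne.isUnit
  have hinv : d⁻¹ = !![A⁻¹, -(B * A⁻¹); 0, 1] := by
    rw [hd', Matrix.inv_def, Matrix.adjugate_fin_two, Matrix.det_fin_two_of,
      Ring.inverse_eq_inv']
    ext i j
    fin_cases i <;> fin_cases j <;>
      simp [Matrix.smul_apply] <;> field_simp
  have h1 : ush * d = fsh - (conjM f)ᵀ * E1 * g := by
    rw [hush, Matrix.nonsing_inv_mul_cancel_right _ _ hdet]
  have hr3 : ((1 + ‖f₃‖ ^ 2 : ℝ) : ℂ) = 1 + (starRingEnd ℂ) f₃ * f₃ := by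
    rw [key]; push_cast; ring
  have hr4 : ((1 + ‖f₄‖ ^ 2 : ℝ) : ℂ) = 1 + (starRingEnd ℂ) f₄ * f₄ := by
    rw [key]; push_cast; ring
  rw [h1, hush, hinv, hfsh', hf, hg, hg₃]
  rw [show conjM ((!![f₄, f₂; f₃, f₁] - (conjM !![f₁, f₂; f₃, f₄])ᵀ * E1 *
        !![g₁, g₂; -(f₃ * f₄), g₄]) * !![A⁻¹, -(B * A⁻¹); 0, 1]) =
      conjM (!![f₄, f₂; f₃, f₁] - (conjM !![f₁, f₂; f₃, f₄])ᵀ * E1 *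
        !![g₁, g₂; -(f₃ * f₄), g₄]) * conjM !![A⁻¹, -(B * A⁻¹); 0, 1] from conjM_mul _ _]
  ext i j
  fin_cases i <;> fin_cases j <;>
    · simp only [E1, E4, conjM_fin_two, conjM, Matrix.map_apply, Matrix.add_apply,
        Matrix.sub_apply, Matrix.mul_apply, Matrix.one_apply, Fin.sum_univ_two,
        Matrix.transpose_apply, Matrix.cons_val', Matrix.cons_val_zero, Matrix.cons_val_one,
        Matrix.head_cons, Matrix.head_fin_const, Matrix.empty_val', Matrix.cons_val_fin_one,
        Matrix.of_apply, Fin.mk_zero, Fin.mk_one, Complex.ofReal_div, hr3, hr4]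
      simp only [map_inv₀, _root_.map_mul, _root_.map_add, _root_.map_sub, _root_.map_neg, _root_.map_one, _root_.map_zero, zero_ne_one, one_ne_zero, if_true, if_false, Complex.conj_conj,
        hconjA]
      rw [hA]
      have h3c : 1 + f₃ * (starRingEnd ℂ) f₃ ≠ 0 := by rwa [mul_comm]
      have h4c : 1 + f₄ * (starRingEnd ℂ) f₄ ≠ 0 := by rwa [mul_comm]
      field_simp
      ring
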